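/- Let n ≥ 2 and let N_{n,2} be the free nilpotent group of rank n and step 2 with generating family X = (x_1, …, x_n). Every palindrome p ∈ N_{n,2} (with respect to X) can be written in the form p = x_1^{α_1} ⋯ x_{i-1}^{α_{i-1}} x_{i+1}^{α_{i+1}} ⋯ x_n^{α_n} · x_i^{α_0} · x_n^{α_n} ⋯ x_{i+1}^{α_{i+1}} x_{i-1}^{α_{i-1}} ⋯ x_1^{α_1} for some index i with 1 ≤ i ≤ n and some integers α_0, α_1, …, α_n. -/

import Mathlib

/-- The element of `G` represented by a word in the alphabet `X^{±1}`:
a letter `(i, true)` stands for `X i` and `(i, false)` for `(X i)⁻¹`. -/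
def evalWord {G : Type*} {n : ℕ} [Group G] (X : Fin n → G) (w : List (Fin n × Bool)) : G :=
  (w.map fun l => if l.2 then X l.1 else (X l.1)⁻¹).prod

/-- `g` is a palindrome with respect to the generating family `X` if it is represented by
some word whose sequence of letters equals its reverse. -/
def IsPalindrome {G : Type*} {n : ℕ} [Group G] (X : Fin n → G) (g : G) : Prop :=
  ∃ w : List (Fin n × Bool), w.reverse = w ∧ evalWord X w = g

/-- `g` is a product of `k` palindromes with respect to `X`. -/
def IsPalProd {G : Type*} {n : ℕ} [Group G] (X : Fin n → G) (k : ℕ) (g : G) : Prop :=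
  ∃ f : Fin k → G, (∀ i, IsPalindrome X (f i)) ∧ (List.ofFn f).prod = g

/-- The palindromic length of `g` with respect to `X`, valued in `ℕ∞`. -/
noncomputable def palLength {G : Type*} {n : ℕ} [Group G] (X : Fin n → G) (g : G) : ℕ∞ :=
  sInf {k : ℕ∞ | ∃ m : ℕ, k = (m : ℕ∞) ∧ IsPalProd X m g}

/-- The palindromic width of `G` with respect to `X`, valued in `ℕ∞`. -/
noncomputable def palWidth {G : Type*} {n : ℕ} [Group G] (X : Fin n → G) : ℕ∞ :=
  ⨆ g : G, palLength X g

/-- The free nilpotent group `N_{n,r}` of rank `n` and step `r`: the quotient of the free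
group on `n` generators by `γ_{r+1} = lowerCentralSeries _ r` (indices: `γ_1` is the
whole group and corresponds to index `0`). -/
abbrev FreeNilpotent (n r : ℕ) :=
  FreeGroup (Fin n) ⧸ Subgroup.lowerCentralSeries (⊤ : Subgroup (FreeGroup (Fin n))) r

/-- The images `x_1, …, x_n` of the free basis in `N_{n,r}`. -/
def nilGen (n r : ℕ) (i : Fin n) : FreeNilpotent n r :=
  QuotientGroup.mk (FreeGroup.of i)

open scoped commutatorElement

section aux
variable {G : Type*} [Group G]

theorem swap_lemma (hc : ∀ a b c : G, ⁅a, b⁆ * c = c * ⁅a, b⁆)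
    (g a M : G) : g * (a * M * a) * g = a * (g * M * g) * a := by
  have h := hc g a
  calc g * (a * M * a) * g
      = ⁅g, a⁆ * ((a * g) * (M * (a * g))) := by group
    _ = ((a * g) * (M * (a * g))) * ⁅g, a⁆ := h _
    _ = (a * g) * (M * ((a * g) * ⁅g, a⁆)) := by group
    _ = (a * g) * (M * (⁅g, a⁆ * (a * g))) := by rw [h]
    _ = a * (g * M * g) * a := by group

theorem conj_pal (hc : ∀ a b c : G, ⁅a, b⁆ * c = c * ⁅a, b⁆) :
    ∀ (L : List G) (m g : G),
      g * (L.prod * m * L.reverse.prod) * g = L.prod * (g * m * g) * L.reverse.prod := by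
  intro L
  induction L with
  | nil => intro m g; simp
  | cons a T ih =>
    intro m g
    have h1 : (a :: T).prod = a * T.prod := List.prod_cons
    have h2 : (a :: T).reverse.prod = T.reverse.prod * a := by simp
    rw [h1, h2]
    calc g * (a * T.prod * m * (T.reverse.prod * a)) * g
        = g * (a * (T.prod * m * T.reverse.prod) * a) * g := by group
      _ = a * (g * (T.prod * m * T.reverse.prod) * g) * a := swap_lemma hc g a _
      _ = a * (T.prod * (g * m * g) * T.reverse.prod) * a := by rw [ih]
      _ = a * T.prod * (g * m * g) * (T.reverse.prod * a) := by group

end aux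

section aux2
variable {G : Type*} [Group G]

/-- The key step for a letter different from the middle index. -/
theorem step_ne (hc : ∀ a b c : G, ⁅a, b⁆ * c = c * ⁅a, b⁆)
    (P S : List G) (u u' m g : G) (h1 : g * u = u') (h2 : u * g = u') :
    g * ((P ++ u :: S).prod * m * (P ++ u :: S).reverse.prod) * g
      = (P ++ u' :: S).prod * m * (P ++ u' :: S).reverse.prod := by
  have e1 : ∀ v : G, (P ++ v :: S).prod = P.prod * (v * S.prod) := by
    intro v; simp [List.prod_append, mul_assoc]
  have e2 : ∀ v : G, (P ++ v :: S).reverse.prod = S.reverse.prod * (v * P.reverse.prod) := by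
    intro v; simp [List.prod_append, mul_assoc]
  rw [e1, e2, e1, e2]
  calc g * (P.prod * (u * S.prod) * m * (S.reverse.prod * (u * P.reverse.prod))) * g
      = g * (P.prod * (u * (S.prod * m * S.reverse.prod) * u) * P.reverse.prod) * g := by group
    _ = P.prod * (g * (u * (S.prod * m * S.reverse.prod) * u) * g) * P.reverse.prod :=
        conj_pal hc P _ g
    _ = P.prod * ((g * u) * (S.prod * m * S.reverse.prod) * (u * g)) * P.reverse.prod := by group
    _ = P.prod * (u' * (S.prod * m * S.reverse.prod) * u') * P.reverse.prod := by rw [h1, h2]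
    _ = P.prod * (u' * S.prod) * m * (S.reverse.prod * (u' * P.reverse.prod)) := by group
end aux2

theorem freeNilpotent_two_comm_central (n : ℕ) (a b c : FreeNilpotent n 2) :
    ⁅a, b⁆ * c = c * ⁅a, b⁆ := by
  let q : FreeGroup (Fin n) →* FreeNilpotent n 2 :=
    QuotientGroup.mk' (Subgroup.lowerCentralSeries (⊤ : Subgroup (FreeGroup (Fin n))) 2)
  have hq : Function.Surjective q := QuotientGroup.mk'_surjective _
  obtain ⟨a, rfl⟩ := hq a
  obtain ⟨b, rfl⟩ := hq b
  obtain ⟨c, rfl⟩ := hq c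
  have h : ⁅⁅a, b⁆, c⁆ ∈ Subgroup.lowerCentralSeries (⊤ : Subgroup (FreeGroup (Fin n))) 2 := by
    rw [show (2 : ℕ) = 1 + 1 from rfl, Subgroup.lowerCentralSeries_succ]
    exact Subgroup.commutator_mem_commutator
      (by rw [Subgroup.top_lowerCentralSeries_one]
          exact Subgroup.commutator_mem_commutator (Subgroup.mem_top a) (Subgroup.mem_top b))
      (Subgroup.mem_top c)
  have h2 : ⁅⁅q a, q b⁆, q c⁆ = 1 := by
    rw [← map_commutatorElement, ← map_commutatorElement]
    rw [show (q ⁅⁅a, b⁆, c⁆ = 1) = (QuotientGroup.mk ⁅⁅a, b⁆, c⁆ =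
      (1 : FreeNilpotent n 2)) from rfl, QuotientGroup.eq_one_iff]
    exact h
  have := commutatorElement_eq_one_iff_mul_comm.mp h2
  rw [this]

/-- Every palindrome `p` in `N_{n,2}` has the form
`x_1^{α_1} ⋯ x_{i-1}^{α_{i-1}} x_{i+1}^{α_{i+1}} ⋯ x_n^{α_n} · x_i^{α_0} ·
 x_n^{α_n} ⋯ x_{i+1}^{α_{i+1}} x_{i-1}^{α_{i-1}} ⋯ x_1^{α_1}`
for some index `i` and integers `α_0, α_1, …, α_n`. -/
theorem palindrome_form_freeNilpotent_two (n : ℕ) (hn : 2 ≤ n) (p : FreeNilpotent n 2)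
    (hp : IsPalindrome (nilGen n 2) p) :
    ∃ (i : Fin n) (α₀ : ℤ) (α : Fin n → ℤ),
      p = ((((List.finRange n).filter fun j => j ≠ i).map fun j => nilGen n 2 j ^ α j).prod)
            * nilGen n 2 i ^ α₀
            * (((((List.finRange n).filter fun j => j ≠ i).reverse).map
                fun j => nilGen n 2 j ^ α j).prod) := by
  classical
  obtain ⟨w, hrev, hw⟩ := hp
  subst hw
  have hc := freeNilpotent_two_comm_central n
  have hpal := List.Palindrome.of_reverse_eq hrev
  clear hrev
  induction hpal with
  | nil =>
    refine ⟨⟨0, by omega⟩, 0, 0, ?_⟩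
    simp [evalWord]
  | singleton l =>
    refine ⟨l.1, if l.2 then 1 else -1, 0, ?_⟩
    obtain ⟨k, b⟩ := l
    cases b <;> simp [evalWord]
  | @cons_concat l w' hp ih =>
    obtain ⟨i, α₀, α, hform⟩ := ih
    obtain ⟨k, b⟩ := l
    set ε : ℤ := if b then 1 else -1 with hε
    have heval : evalWord (nilGen n 2) ((k, b) :: (w' ++ [(k, b)]))
        = (nilGen n 2 k ^ ε) * evalWord (nilGen n 2) w' * (nilGen n 2 k ^ ε) := by
      rw [hε]; cases b <;> simp [evalWord, mul_assoc]
    by_cases hk : k = i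
    · subst hk
      refine ⟨k, α₀ + 2 * ε, α, ?_⟩
      rw [heval, hform]; simp only [List.map_reverse]
      rw [conj_pal hc]
      congr 1
      congr 1
      rw [← zpow_add, ← zpow_add]
      congr 1
      ring
    · refine ⟨i, α₀, Function.update α k (α k + ε), ?_⟩
      rw [heval, hform]; simp only [List.map_reverse]
      set ℓ : List (Fin n) := (List.finRange n).filter (fun j => j ≠ i) with hℓ
      have hkmem : k ∈ ℓ := by
        rw [hℓ]
        exact List.mem_filter.mpr ⟨List.mem_finRange k, by simp [hk]⟩
      obtain ⟨s, t, hst⟩ := List.append_of_mem hkmem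
      have hnd : ℓ.Nodup := (List.nodup_finRange n).filter _
      rw [hst] at hnd
      have h2 := List.nodup_append.mp hnd
      have hks : k ∉ s := fun hs => h2.2.2 k hs k List.mem_cons_self rfl
      have hkt : k ∉ t := (List.nodup_cons.mp h2.2.1).1
      have hmap : ∀ β : Fin n → ℤ,
          ℓ.map (fun j => nilGen n 2 j ^ β j)
            = (s.map fun j => nilGen n 2 j ^ β j)
              ++ (nilGen n 2 k ^ β k) :: (t.map fun j => nilGen n 2 j ^ β j) := by
        intro β; rw [hst]; simp
      rw [hmap, hmap]
      have hsmap : s.map (fun j => nilGen n 2 j ^ Function.update α k (α k + ε) j)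
          = s.map (fun j => nilGen n 2 j ^ α j) :=
        List.map_congr_left fun j hj => by
          rw [Function.update_of_ne (fun h : j = k => hks (h ▸ hj))]
      have htmap : t.map (fun j => nilGen n 2 j ^ Function.update α k (α k + ε) j)
          = t.map (fun j => nilGen n 2 j ^ α j) :=
        List.map_congr_left fun j hj => by
          rw [Function.update_of_ne (fun h : j = k => hkt (h ▸ hj))]
      rw [hsmap, htmap, Function.update_self]
      exact step_ne hc _ _ _ _ _ _
        (by rw [← zpow_add, add_comm]) (by rw [← zpow_add])
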